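/- Let τ, r ≥ 0 be constants, A ∈ ℝ^{n×n}, B ∈ ℝ^{n×m}, k ∈ ℝ^{m×n}, and let (x, u) be a solution of the constant-delay closed-loop system. Then for all t ≥ max(r, τ) the identity u(t−τ) = k e^{Ar} x(t−τ) + k x(t) − k e^{Ar} x(t−r) holds. -/

import Mathlib

open MeasureTheory

/-- Matrix-vector multiplication between Euclidean spaces. -/
noncomputable def mv {n m : ℕ} (A : Matrix (Fin n) (Fin m) ℝ)
    (x : EuclideanSpace ℝ (Fin m)) : EuclideanSpace ℝ (Fin n) :=
  Matrix.toEuclideanLin A x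

/-- `mexp A t = exp (t A)`, the matrix exponential. -/
noncomputable def mexp {n : ℕ} (A : Matrix (Fin n) (Fin n) ℝ) (t : ℝ) :
    Matrix (Fin n) (Fin n) ℝ :=
  NormedSpace.exp (t • A)

attribute [local instance] Matrix.linftyOpSemiNormedRing Matrix.linftyOpNormedRing
  Matrix.linftyOpNormedAlgebra

namespace Stmt9Aux

variable {n m p : ℕ}

lemma mv_mv (M : Matrix (Fin p) (Fin n) ℝ) (N : Matrix (Fin n) (Fin m) ℝ)
    (v : EuclideanSpace ℝ (Fin m)) : mv (M * N) v = mv M (mv N v) := by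
  simp [mv, Matrix.toEuclideanLin_apply, Matrix.mulVec_mulVec]

lemma mv_one (v : EuclideanSpace ℝ (Fin n)) : mv (1 : Matrix (Fin n) (Fin n) ℝ) v = v := by
  simp [mv, Matrix.toEuclideanLin_apply]

lemma mexp_mul (A : Matrix (Fin n) (Fin n) ℝ) (s t : ℝ) :
    mexp A s * mexp A t = mexp A (s + t) := by
  have hc : Commute (s • A) (t • A) := ((Commute.refl A).smul_right t).smul_left s
  rw [mexp, mexp, mexp, add_smul]
  exact (NormedSpace.exp_add_of_commute hc).symm

lemma mexp_zero (A : Matrix (Fin n) (Fin n) ℝ) : mexp A 0 = 1 := by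
  simp [mexp, NormedSpace.exp_zero]

lemma mexp_comm (A : Matrix (Fin n) (Fin n) ℝ) (t : ℝ) :
    A * mexp A t = mexp A t * A :=
  ((Commute.refl A).smul_right t).exp_right

/-- `mv` as a continuous linear map. -/
noncomputable def mvCLM (M : Matrix (Fin n) (Fin m) ℝ) :
    EuclideanSpace ℝ (Fin m) →L[ℝ] EuclideanSpace ℝ (Fin n) :=
  LinearMap.toContinuousLinearMap (Matrix.toEuclideanLin M)

@[simp] lemma mvCLM_apply (M : Matrix (Fin n) (Fin m) ℝ) (v : EuclideanSpace ℝ (Fin m)) :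
    mvCLM M v = mv M v := rfl

/-- `mv` as a continuous linear map in the matrix argument. -/
noncomputable def matCLM : Matrix (Fin n) (Fin m) ℝ →L[ℝ]
    (EuclideanSpace ℝ (Fin m) →L[ℝ] EuclideanSpace ℝ (Fin n)) :=
  LinearMap.toContinuousLinearMap
    ((LinearMap.toContinuousLinearMap :
        (EuclideanSpace ℝ (Fin m) →ₗ[ℝ] EuclideanSpace ℝ (Fin n)) ≃ₗ[ℝ]
        (EuclideanSpace ℝ (Fin m) →L[ℝ] EuclideanSpace ℝ (Fin n))).toLinearMap ∘ₗ
      (Matrix.toEuclideanLin :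
        Matrix (Fin n) (Fin m) ℝ ≃ₗ[ℝ]
          (EuclideanSpace ℝ (Fin m) →ₗ[ℝ] EuclideanSpace ℝ (Fin n))).toLinearMap)

@[simp] lemma matCLM_apply (M : Matrix (Fin n) (Fin m) ℝ) (v : EuclideanSpace ℝ (Fin m)) :
    matCLM M v = mv M v := rfl

lemma hasDerivAt_mexp_neg (A : Matrix (Fin n) (Fin n) ℝ) (s : ℝ) :
    HasDerivAt (fun w : ℝ => mexp A (-w)) (-(A * mexp A (-s))) s := by
  have h1 : HasDerivAt (fun w : ℝ => NormedSpace.exp (w • A))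
      (A * NormedSpace.exp ((-s) • A)) (-s) := hasDerivAt_exp_smul_const' A (-s)
  have h2 : HasDerivAt (fun w : ℝ => -w) (-1 : ℝ) s := (hasDerivAt_id s).neg
  have := h1.scomp s h2
  simp only [neg_one_smul] at this
  exact this

end Stmt9Aux

open Stmt9Aux in
theorem stmt_9 (n m : ℕ) (A : Matrix (Fin n) (Fin n) ℝ)
    (B : Matrix (Fin n) (Fin m) ℝ) (k : Matrix (Fin m) (Fin n) ℝ)
    (τ r : ℝ) (hτ : 0 ≤ τ) (hr : 0 ≤ r)
    (x : ℝ → EuclideanSpace ℝ (Fin n)) (u : ℝ → EuclideanSpace ℝ (Fin m))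
    (hxc : ContinuousOn x (Set.Ici 0))
    (huc : ContinuousOn u (Set.Ici (-max r τ)))
    (hplant : ∀ t : ℝ, 0 ≤ t →
      x t = x 0 + ∫ s in (0 : ℝ)..t, (mv A (x s) + mv B (u (s - τ))))
    (hfb : ∀ t : ℝ, 0 ≤ t →
      u t = mv k (mv (mexp A r) (x t)) +
        mv k (∫ s in t..(t + r), mv (mexp A (t + r - s)) (mv B (u (s - r))))) :
    ∀ t : ℝ, max r τ ≤ t →
      u (t - τ) = mv k (mv (mexp A r) (x (t - τ))) + mv k (x t) -
        mv k (mv (mexp A r) (x (t - r))) := by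
  intro t ht
  have hrt : r ≤ t := le_trans (le_max_left r τ) ht
  have hτt : τ ≤ t := le_trans (le_max_right r τ) ht
  have htτ : (0:ℝ) ≤ t - τ := by linarith
  have htr : (0:ℝ) ≤ t - r := by linarith
  -- continuity of the shifted input
  have huτ : ContinuousOn (fun s : ℝ => u (s - τ)) (Set.Ici 0) := by
    apply huc.comp (continuous_id.sub continuous_const).continuousOn
    intro s hs
    simp only [Set.mem_Ici, Pi.sub_apply, id_eq] at hs ⊢
    have := le_max_right r τ
    linarith
  -- the plant vector field
  set f : ℝ → EuclideanSpace ℝ (Fin n) :=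
    fun s => mv A (x s) + mv B (u (s - τ)) with hf_def
  have hf_cont : ContinuousOn f (Set.Ici 0) := by
    exact ((mvCLM A).continuous.comp_continuousOn hxc).add
      ((mvCLM B).continuous.comp_continuousOn huτ)
  -- the state is differentiable at positive times
  have hx_deriv : ∀ s : ℝ, 0 < s → HasDerivAt x (f s) s := by
    intro s hs
    have hint : IntervalIntegrable f volume 0 s := by
      apply ContinuousOn.intervalIntegrable
      apply hf_cont.mono
      rw [Set.uIcc_of_le hs.le]
      exact fun y hy => hy.1
    have hmeas : StronglyMeasurableAtFilter f (nhds s) :=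
      (hf_cont.mono (Set.Ioi_subset_Ici le_rfl)).stronglyMeasurableAtFilter isOpen_Ioi s hs
    have hcont : ContinuousAt f s :=
      hf_cont.continuousAt (Ici_mem_nhds hs)
    have key : HasDerivAt (fun w => x 0 + ∫ σ in (0:ℝ)..w, f σ) (f s) s :=
      (intervalIntegral.integral_hasDerivAt_right hint hmeas hcont).const_add (x 0)
    apply key.congr_of_eventuallyEq
    filter_upwards [Ioi_mem_nhds hs] with w hw
    exact hplant w (le_of_lt hw)
  -- Duhamel formula on [t - r, t]
  have hDuhamel :
      (∫ s in (t - r)..t, mv (mexp A (t - s)) (mv B (u (s - τ))))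
        = x t - mv (mexp A r) (x (t - r)) := by
    set h : ℝ → EuclideanSpace ℝ (Fin n) := fun s => mv (mexp A (-s)) (x s) with hh_def
    set g : ℝ → EuclideanSpace ℝ (Fin n) := fun s => mv (mexp A (-s)) (mv B (u (s - τ)))
      with hg_def
    have hmexp_cont : Continuous (fun s : ℝ => mexp A (-s)) := by
      have : Continuous (fun s : ℝ => (-s) • A) := by fun_prop
      exact NormedSpace.exp_continuous.comp this
    have hclm_cont : Continuous (fun s : ℝ => matCLM (mexp A (-s)) :
        ℝ → (EuclideanSpace ℝ (Fin n) →L[ℝ] EuclideanSpace ℝ (Fin n))) :=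
      matCLM.continuous.comp hmexp_cont
    have hh_cont : ContinuousOn h (Set.Icc (t - r) t) := by
      have : ContinuousOn (fun s => matCLM (mexp A (-s)) (x s)) (Set.Icc (t - r) t) :=
        ContinuousOn.clm_apply hclm_cont.continuousOn
          (hxc.mono (fun y hy => hy.1.trans' htr : Set.Icc (t - r) t ⊆ Set.Ici 0))
      simpa [hh_def] using this
    have hg_cont : ContinuousOn g (Set.Icc (t - r) t) := by
      have : ContinuousOn (fun s => matCLM (mexp A (-s)) (mv B (u (s - τ))))
          (Set.Icc (t - r) t) :=
        ContinuousOn.clm_apply hclm_cont.continuousOn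
          (((mvCLM B).continuous.comp_continuousOn huτ).mono
            (fun y hy => hy.1.trans' htr))
      simpa [hg_def] using this
    have hg_int : IntervalIntegrable g volume (t - r) t := by
      apply ContinuousOn.intervalIntegrable
      rwa [Set.uIcc_of_le (by linarith : t - r ≤ t)]
    have hderiv : ∀ s ∈ Set.Ioo (t - r) t, HasDerivAt h (g s) s := by
      intro s hs
      have hs0 : 0 < s := lt_of_le_of_lt htr hs.1
      have hc : HasDerivAt (fun w : ℝ => matCLM (mexp A (-w)))
          (matCLM (-(A * mexp A (-s)))) s := by
        have := matCLM.hasFDerivAt.comp_hasDerivAt s (hasDerivAt_mexp_neg A s)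
        exact this
      have hx' := hx_deriv s hs0
      have := hc.clm_apply hx'
      have hval : matCLM (-(A * mexp A (-s))) (x s)
          + matCLM (mexp A (-s)) (f s) = g s := by
        simp only [matCLM_apply, hf_def, hg_def]
        have h1 : mv (-(A * mexp A (-s))) (x s) = - mv (A * mexp A (-s)) (x s) := by
          simp [mv, map_neg]
        have h2 : mv (mexp A (-s)) (mv A (x s) + mv B (u (s - τ)))
            = mv (mexp A (-s)) (mv A (x s)) + mv (mexp A (-s)) (mv B (u (s - τ))) := by
          simp [mv, map_add]
        rw [h1, h2, ← mv_mv, ← mv_mv, ← mexp_comm]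
        abel
      rw [hval] at this
      simpa [hh_def] using this
    have hFTC : (∫ s in (t - r)..t, g s) = h t - h (t - r) :=
      intervalIntegral.integral_eq_sub_of_hasDerivAt_of_le (by linarith) hh_cont hderiv hg_int
    -- apply e^{tA} to both sides
    have happ := congrArg (fun v => mvCLM (mexp A t) v) hFTC
    simp only [map_sub] at happ
    rw [← (mvCLM (mexp A t)).intervalIntegral_comp_comm hg_int] at happ
    have hL : (∫ s in (t - r)..t, mvCLM (mexp A t) (g s))
        = ∫ s in (t - r)..t, mv (mexp A (t - s)) (mv B (u (s - τ))) := by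
      apply intervalIntegral.integral_congr
      intro s _
      simp only [hg_def, mvCLM_apply]
      rw [← mv_mv, mexp_mul, show t + -s = t - s from by ring]
    have hRt : mvCLM (mexp A t) (h t) = x t := by
      simp only [hh_def, mvCLM_apply]
      rw [← mv_mv, mexp_mul]
      simp [mexp_zero, mv_one]
    have hRa : mvCLM (mexp A t) (h (t - r)) = mv (mexp A r) (x (t - r)) := by
      simp only [hh_def, mvCLM_apply]
      rw [← mv_mv, mexp_mul]
      congr 2
      ring
    rw [hL, hRt, hRa] at happ
    exact happ
  -- change of variables in the feedback integral
  have hCoV : (∫ s in (t - τ)..(t - τ + r), mv (mexp A (t - τ + r - s)) (mv B (u (s - r))))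
      = ∫ s in (t - r)..t, mv (mexp A (t - s)) (mv B (u (s - τ))) := by
    have := intervalIntegral.integral_comp_add_right
      (a := t - τ) (b := t - τ + r)
      (fun σ => mv (mexp A (t - σ)) (mv B (u (σ - τ)))) (τ - r)
    have harg : ∀ s : ℝ, mv (mexp A (t - (s + (τ - r)))) (mv B (u (s + (τ - r) - τ)))
        = mv (mexp A (t - τ + r - s)) (mv B (u (s - r))) := by
      intro s
      rw [show t - (s + (τ - r)) = t - τ + r - s by ring,
        show s + (τ - r) - τ = s - r by ring]
    simp only [harg] at this
    rw [this, show t - τ + (τ - r) = t - r by ring, show t - τ + r + (τ - r) = t by ring]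
  -- conclude
  have hfb' := hfb (t - τ) htτ
  rw [show t - τ + r = t - τ + r from rfl] at hfb'
  rw [hCoV, hDuhamel] at hfb'
  rw [hfb']
  have : mv k (x t - mv (mexp A r) (x (t - r)))
      = mv k (x t) - mv k (mv (mexp A r) (x (t - r))) := by
    simp [mv, map_sub]
  rw [this]
  abel
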